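/- For any tree T on n ≥ 3 vertices, the Randić index satisfies R(T) ≤ (n - 3 + 2√2)/2, with equality if and only if T is the path P_n. -/

import Mathlib

open Finset Real Matrix

/-- The Randić index of a finite simple graph:
`R(G) = ∑_{uv ∈ E(G)} 1/√(d(u)·d(v))`. -/
noncomputable def randicIndex {V : Type*} [Fintype V] (G : SimpleGraph V) : ℝ :=
  letI : DecidableRel G.Adj := Classical.decRel _
  ∑ e ∈ G.edgeFinset,
    Sym2.lift ⟨fun u v => 1 / Real.sqrt ((G.degree u : ℝ) * (G.degree v : ℝ)),
      fun u v => by simp [mul_comm]⟩ e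

/-- The algebraic connectivity of a graph on `Fin n`: the second smallest eigenvalue
of the Laplacian matrix, characterized (via Courant–Fischer, since the all-ones vector
is an eigenvector of the smallest eigenvalue `0`) as the infimum of the Rayleigh
quotient over nonzero vectors orthogonal to the all-ones vector. -/
noncomputable def algebraicConnectivity {n : ℕ} (G : SimpleGraph (Fin n)) : ℝ :=
  letI : DecidableRel G.Adj := Classical.decRel _
  sInf {r : ℝ | ∃ x : Fin n → ℝ, x ≠ 0 ∧ (∑ i, x i) = 0 ∧
    r = (x ⬝ᵥ ((G.lapMatrix ℝ).mulVec x)) / (x ⬝ᵥ x)}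

/-- The edge connectivity of a graph: the least number of edges whose deletion
disconnects the graph. -/
noncomputable def edgeConnectivity {V : Type*} [Fintype V] (G : SimpleGraph V) : ℕ :=
  sInf {k : ℕ | ∃ s : Set (Sym2 V), s ⊆ G.edgeSet ∧ s.ncard = k ∧
    ¬ (G.deleteEdges s).Connected}

/-- The star `K_{1,n-1}` on vertex set `Fin n`: vertex `0` is adjacent to all others. -/
def starGraph (n : ℕ) : SimpleGraph (Fin n) where
  Adj i j := i ≠ j ∧ ((i : ℕ) = 0 ∨ (j : ℕ) = 0)
  symm := ⟨fun _ _ h => ⟨h.1.symm, h.2.symm⟩⟩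
  loopless := ⟨fun _ h => h.1 rfl⟩



private lemma key_alg (a b : ℝ) (ha : 0 < a) (hb : 0 < b) :
    1/(2*a^2) + 1/(2*b^2) - 1/(a*b) = (1/a - 1/b)^2 / 2 := by
  field_simp
  ring

private lemma gap_eq {x y : ℝ} (hx : 0 < x) (hy : 0 < y) :
    1/(2*x) + 1/(2*y) - 1 / Real.sqrt (x*y)
      = (1/Real.sqrt x - 1/Real.sqrt y)^2 / 2 := by
  have hx' : 0 < Real.sqrt x := Real.sqrt_pos.2 hx
  have hy' : 0 < Real.sqrt y := Real.sqrt_pos.2 hy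
  have h := key_alg _ _ hx' hy'
  rw [Real.sq_sqrt hx.le, Real.sq_sqrt hy.le] at h
  rw [Real.sqrt_mul hx.le]
  exact h

private lemma const_eq : (1 - 1/Real.sqrt 2)^2/2 = (3 - 2*Real.sqrt 2)/4 := by
  have h2 : Real.sqrt 2 ^ 2 = 2 := Real.sq_sqrt (by norm_num)
  have hp : 0 < Real.sqrt 2 := Real.sqrt_pos.2 (by norm_num)
  field_simp
  nlinarith [h2, hp]

private lemma leaf_gap_lower {y : ℝ} (hy : 2 ≤ y) :
    (3 - 2*Real.sqrt 2)/4 ≤ (1 - 1/Real.sqrt y)^2/2 := by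
  rw [← const_eq]
  have h1 : (1:ℝ) ≤ Real.sqrt 2 := by
    rw [show (1:ℝ) = Real.sqrt 1 by simp]
    exact Real.sqrt_le_sqrt (by norm_num)
  have h2 : Real.sqrt 2 ≤ Real.sqrt y := Real.sqrt_le_sqrt hy
  have hp : 0 < Real.sqrt 2 := by linarith
  have h3 : 1/Real.sqrt y ≤ 1/Real.sqrt 2 := one_div_le_one_div_of_le hp h2
  have h4 : 0 ≤ 1 - 1/Real.sqrt 2 := by
    have : 1/Real.sqrt 2 ≤ 1 := by
      rw [div_le_one hp]; exact h1
    linarith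
  have := pow_le_pow_left₀ h4 (by linarith : 1 - 1/Real.sqrt 2 ≤ 1 - 1/Real.sqrt y) 2
  linarith

private lemma leaf_gap_eq {y : ℝ} (hy : 2 ≤ y)
    (h : (1 - 1/Real.sqrt y)^2/2 = (3 - 2*Real.sqrt 2)/4) : y = 2 := by
  rw [← const_eq] at h
  have h1 : (1:ℝ) ≤ Real.sqrt 2 := by
    rw [show (1:ℝ) = Real.sqrt 1 by simp]
    exact Real.sqrt_le_sqrt (by norm_num)
  have h2 : Real.sqrt 2 ≤ Real.sqrt y := Real.sqrt_le_sqrt hy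
  have hp : 0 < Real.sqrt 2 := by linarith
  have hyp : 0 < Real.sqrt y := by linarith
  have h4 : 0 ≤ 1 - 1/Real.sqrt 2 := by
    have : 1/Real.sqrt 2 ≤ 1 := by rw [div_le_one hp]; exact h1
    linarith
  have h5 : 0 ≤ 1 - 1/Real.sqrt y := by
    have h3 : 1/Real.sqrt y ≤ 1/Real.sqrt 2 := one_div_le_one_div_of_le hp h2
    linarith
  have h6 : (1 - 1/Real.sqrt y) = (1 - 1/Real.sqrt 2) := by
    have : (1 - 1/Real.sqrt y)^2 = (1 - 1/Real.sqrt 2)^2 := by linarith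
    calc (1 - 1/Real.sqrt y) = Real.sqrt ((1 - 1/Real.sqrt y)^2) := (Real.sqrt_sq h5).symm
      _ = Real.sqrt ((1 - 1/Real.sqrt 2)^2) := by rw [this]
      _ = 1 - 1/Real.sqrt 2 := Real.sqrt_sq h4
  have h7 : Real.sqrt y = Real.sqrt 2 := by
    have h8 : (Real.sqrt y)⁻¹ = (Real.sqrt 2)⁻¹ := by
      rw [← one_div, ← one_div]; linarith
    exact inv_injective h8
  calc y = Real.sqrt y ^ 2 := (Real.sq_sqrt (by linarith : (0:ℝ) ≤ y)).symm
    _ = Real.sqrt 2 ^ 2 := by rw [h7]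
    _ = 2 := Real.sq_sqrt (by norm_num)

private lemma sum_edge_lift {V : Type*} [Fintype V] [DecidableEq V] (G : SimpleGraph V)
    [DecidableRel G.Adj] (f : V → V → ℝ) (hf : ∀ u v, f u v = f v u) :
    (∑ d : G.Dart, f d.fst d.snd) = 2 * ∑ e ∈ G.edgeFinset, Sym2.lift ⟨f, hf⟩ e := by
  rw [← Finset.sum_fiberwise_of_maps_to (t := G.edgeFinset) (g := SimpleGraph.Dart.edge)
    (fun d _ => by rw [SimpleGraph.mem_edgeFinset]; exact d.edge_mem)
    (fun d => f d.fst d.snd)]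
  rw [Finset.mul_sum]
  apply Finset.sum_congr rfl
  intro e he
  rw [SimpleGraph.mem_edgeFinset] at he
  induction e with
  | _ u v =>
    have hadj : G.Adj u v := he
    let d0 : G.Dart := ⟨(u, v), hadj⟩
    have hfib : (Finset.univ.filter fun d' : G.Dart => d'.edge = s(u,v)) = {d0, d0.symm} :=
      Finset.ext fun d' => by
        simp [SimpleGraph.dart_edge_eq_mk'_iff, SimpleGraph.Dart.ext_iff, d0]
    rw [hfib, Finset.sum_pair d0.symm_ne.symm]
    simp only [Sym2.lift_mk]
    show f u v + f v u = 2 * f u v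
    rw [hf v u]; ring



private lemma closed_walk {V : Type*} {G : SimpleGraph V} {S : Set V}
    (hS : ∀ x ∈ S, ∀ y, G.Adj x y → y ∈ S) :
    ∀ {a b : V} (_ : G.Walk a b), a ∈ S → b ∈ S := by
  intro a b p
  induction p with
  | nil => exact id
  | cons h q ih => exact fun ha => ih (hS _ ha _ h)

private lemma degree_pos {n : ℕ} (hn2 : 2 ≤ n) {T : SimpleGraph (Fin n)}
    [DecidableRel T.Adj] (hc : T.Connected) (v : Fin n) : 0 < T.degree v := by
  rw [SimpleGraph.degree_pos_iff_exists_adj]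
  have h1 : 1 < Fintype.card (Fin n) := by simp; omega
  obtain ⟨w, hw⟩ := Fintype.exists_ne_of_one_lt_card h1 v
  obtain ⟨p⟩ := hc.preconnected v w
  have hnil : ¬ p.Nil := SimpleGraph.Walk.not_nil_of_ne (Ne.symm hw)
  obtain ⟨u, hadj, q, rfl⟩ := SimpleGraph.Walk.not_nil_iff.mp hnil
  exact ⟨u, hadj⟩

private lemma adj_degree_two {n : ℕ} (hn : 3 ≤ n) {T : SimpleGraph (Fin n)}
    [DecidableRel T.Adj] (hc : T.Connected) {v u : Fin n} (hadj : T.Adj v u)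
    (hv : T.degree v = 1) : 2 ≤ T.degree u := by
  by_contra h
  have hu : T.degree u = 1 := by
    have := degree_pos (by omega) hc u
    omega
  -- the neighborhood of a degree-1 vertex with a known neighbor is exactly that neighbor
  have huniq : ∀ {x y : Fin n}, T.degree x = 1 → T.Adj x y →
      ∀ z, T.Adj x z → z = y := by
    intro x y hx hxy z hxz
    obtain ⟨a, ha⟩ := Finset.card_eq_one.mp hx
    have h1 : y ∈ T.neighborFinset x := by rwa [SimpleGraph.mem_neighborFinset]
    have h2 : z ∈ T.neighborFinset x := by rwa [SimpleGraph.mem_neighborFinset]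
    rw [ha, Finset.mem_singleton] at h1 h2
    exact h2.trans h1.symm
  have hS : ∀ x ∈ ({v, u} : Set (Fin n)), ∀ y, T.Adj x y → y ∈ ({v, u} : Set (Fin n)) := by
    rintro x (rfl | rfl) y hxy
    · right; exact huniq hv hadj y hxy
    · left; exact huniq hu hadj.symm y hxy
  have hall : ∀ w : Fin n, w ∈ ({v, u} : Set (Fin n)) := by
    intro w
    obtain ⟨p⟩ := hc.preconnected v w
    exact closed_walk hS p (by left; rfl)
  have hsub : (Finset.univ : Finset (Fin n)) ⊆ {v, u} := by
    intro w _
    have h := hall w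
    simp only [Set.mem_insert_iff, Set.mem_singleton_iff] at h
    rcases h with h | h <;> simp [h]
  have := Finset.card_le_card hsub
  have hcard : ({v, u} : Finset (Fin n)).card ≤ 2 := Finset.card_insert_le _ _ |>.trans (by simp)
  simp only [Finset.card_univ, Fintype.card_fin] at this
  omega

private lemma sum_degrees_tree {n : ℕ} (hn : 3 ≤ n) {T : SimpleGraph (Fin n)}
    [DecidableRel T.Adj] (hT : T.IsTree) : ∑ v, T.degree v = 2 * (n - 1) := by
  rw [SimpleGraph.sum_degrees_eq_twice_card_edges]
  have h := hT.card_edgeFinset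
  simp only [Fintype.card_fin] at h
  omega

private lemma leaves_card {n : ℕ} (hn : 3 ≤ n) {T : SimpleGraph (Fin n)}
    [DecidableRel T.Adj] (hT : T.IsTree) :
    2 ≤ (Finset.univ.filter fun v => T.degree v = 1).card ∧
    ((∀ v, T.degree v ≤ 2) → (Finset.univ.filter fun v => T.degree v = 1).card = 2) := by
  have hsum := sum_degrees_tree hn hT
  set L := Finset.univ.filter fun v => T.degree v = 1 with hL
  set Lc := Finset.univ.filter (fun v => ¬ (T.degree v = 1)) with hLc
  have hsplit : ∑ v ∈ L, T.degree v + ∑ v ∈ Lc, T.degree v = ∑ v : Fin n, T.degree v :=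
    Finset.sum_filter_add_sum_filter_not _ _ _
  have hLsum : ∑ v ∈ L, T.degree v = L.card := by
    have hone : ∀ v ∈ L, T.degree v = 1 := fun v hv =>
      (Finset.mem_filter.mp hv).2
    rw [show ∑ v ∈ L, T.degree v = ∑ _v ∈ L, 1 from Finset.sum_congr rfl hone]
    simp
  have hcards : L.card + Lc.card = n := by
    rw [hL, hLc, Finset.card_filter_add_card_filter_not, Finset.card_univ,
      Fintype.card_fin]
  have hdeg2 : ∀ v ∈ Lc, 2 ≤ T.degree v := by
    intro v hv
    have h1 : ¬ (T.degree v = 1) := by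
      rw [hLc, Finset.mem_filter] at hv
      exact hv.2
    have h2 := degree_pos (by omega) hT.isConnected v
    omega
  have hLc2 : Lc.card • 2 ≤ ∑ v ∈ Lc, T.degree v :=
    Finset.card_nsmul_le_sum _ _ _ hdeg2
  rw [smul_eq_mul] at hLc2
  constructor
  · omega
  · intro hle
    have hLc3 : ∑ v ∈ Lc, T.degree v ≤ Lc.card • 2 :=
      Finset.sum_le_card_nsmul _ _ _ (fun v _ => hle v)
    rw [smul_eq_mul] at hLc3
    omega



private lemma aux_end {n : ℕ} {T : SimpleGraph (Fin n)} [DecidableRel T.Adj]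
    {v1 v2 : Fin n} (hne : v1 ≠ v2) (P : T.Walk v1 v2)
    (h1 : T.degree v1 = 1) {z' : Fin n} (hz' : z' ∉ P.support)
    (hadj : T.Adj v1 z') : False := by
  have hnil : ¬ P.Nil := SimpleGraph.Walk.not_nil_of_ne hne
  obtain ⟨u, hu, q, rfl⟩ := SimpleGraph.Walk.not_nil_iff.mp hnil
  have husupp : u ∈ (SimpleGraph.Walk.cons hu q).support := by
    rw [SimpleGraph.Walk.support_cons]
    exact List.mem_cons_of_mem _ q.start_mem_support
  have hzu : z' ≠ u := fun h => hz' (h ▸ husupp)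
  have hsub : ({z', u} : Finset (Fin n)) ⊆ T.neighborFinset v1 := by
    intro x hx
    rcases Finset.mem_insert.mp hx with rfl | hx
    · rwa [SimpleGraph.mem_neighborFinset]
    · rw [Finset.mem_singleton] at hx
      subst hx
      rwa [SimpleGraph.mem_neighborFinset]
  have := Finset.card_le_card hsub
  rw [Finset.card_pair hzu, SimpleGraph.card_neighborFinset_eq_degree, h1] at this
  omega

private lemma support_univ {n : ℕ} {T : SimpleGraph (Fin n)} [DecidableRel T.Adj]
    (hT : T.IsTree) (hdeg : ∀ v, T.degree v ≤ 2)
    {v1 v2 : Fin n} (h1 : T.degree v1 = 1) (h2 : T.degree v2 = 1) (hne : v1 ≠ v2)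
    (P : T.Walk v1 v2) (hP : P.IsPath) : ∀ z : Fin n, z ∈ P.support := by
  by_contra hc
  push_neg at hc
  obtain ⟨x, hx⟩ := hc
  -- find an edge crossing into the support
  have hcross : ∃ z', z' ∉ P.support ∧ ∃ z, T.Adj z' z ∧ z ∈ P.support := by
    by_contra hc2
    push_neg at hc2
    have hS : ∀ a ∈ {w : Fin n | w ∉ P.support}, ∀ y, T.Adj a y →
        y ∈ {w : Fin n | w ∉ P.support} := by
      intro a ha y hay
      exact hc2 a ha y hay
    obtain ⟨q⟩ := hT.isConnected.preconnected x v1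
    exact (closed_walk hS q hx) P.start_mem_support
  obtain ⟨z', hz', z, hadj, hz⟩ := hcross
  by_cases hzv1 : z = v1
  · subst hzv1; exact aux_end hne P h1 hz' hadj.symm
  by_cases hzv2 : z = v2
  · subst hzv2
    refine aux_end (Ne.symm hne) P.reverse h2 ?_ hadj.symm
    rwa [SimpleGraph.Walk.support_reverse, List.mem_reverse]
  -- z is interior: it has three distinct neighbors
  · have hq1 : (P.takeUntil z hz).IsPath := hP.takeUntil hz
    have hq2 : (P.dropUntil z hz).IsPath := hP.dropUntil hz
    set q1 := P.takeUntil z hz with hq1d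
    set q2 := P.dropUntil z hz with hq2d
    have hr : ¬ q1.reverse.Nil := SimpleGraph.Walk.not_nil_of_ne hzv1
    obtain ⟨a, ha, r1, hrd⟩ := SimpleGraph.Walk.not_nil_iff.mp hr
    have hamem : a ∈ q1.support := by
      have : a ∈ q1.reverse.support := by
        rw [hrd, SimpleGraph.Walk.support_cons]
        exact List.mem_cons_of_mem _ r1.start_mem_support
      rwa [SimpleGraph.Walk.support_reverse, List.mem_reverse] at this
    have hq2n : ¬ q2.Nil := SimpleGraph.Walk.not_nil_of_ne hzv2
    obtain ⟨b, hb, r2, hq2e⟩ := SimpleGraph.Walk.not_nil_iff.mp hq2n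
    have hbmem : b ∈ q2.support.tail := by
      rw [hq2e, SimpleGraph.Walk.support_cons]
      exact r2.start_mem_support
    -- a and b are distinct, by nodup of P.support = q1.support ++ q2.support.tail
    have hsupp : P.support = q1.support ++ q2.support.tail := by
      rw [hq1d, hq2d, ← SimpleGraph.Walk.support_append, SimpleGraph.Walk.take_spec]
    have hnd : P.support.Nodup := hP.support_nodup
    rw [hsupp] at hnd
    have hdisj := List.disjoint_of_nodup_append hnd
    have hab : a ≠ b := fun h => (hdisj hamem) (h ▸ hbmem)
    have hamemP : a ∈ P.support := by
      rw [hsupp]; exact List.mem_append_left _ hamem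
    have hbmemP : b ∈ P.support := by
      rw [hsupp]; exact List.mem_append_right _ hbmem
    have hza : a ≠ z' := fun h => hz' (h ▸ hamemP)
    have hzb : b ≠ z' := fun h => hz' (h ▸ hbmemP)
    have hsub : ({a, b, z'} : Finset (Fin n)) ⊆ T.neighborFinset z := by
      intro x hx
      simp only [Finset.mem_insert, Finset.mem_singleton] at hx
      rcases hx with rfl | rfl | rfl
      · rw [SimpleGraph.mem_neighborFinset]; exact ha
      · rw [SimpleGraph.mem_neighborFinset]; exact hb
      · rw [SimpleGraph.mem_neighborFinset]; exact hadj.symm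
    have hcard : ({a, b, z'} : Finset (Fin n)).card = 3 := by
      rw [Finset.card_insert_of_notMem (by simp [hab, hza]),
        Finset.card_insert_of_notMem (by simp [hzb]), Finset.card_singleton]
    have := Finset.card_le_card hsub
    rw [hcard, SimpleGraph.card_neighborFinset_eq_degree] at this
    exact absurd (hdeg z) (by omega)

private lemma iso_of_spec {n : ℕ} (hn : 3 ≤ n) {T : SimpleGraph (Fin n)} [DecidableRel T.Adj]
    (hT : T.IsTree) (hdeg : ∀ v, T.degree v ≤ 2) :
    Nonempty (T ≃g SimpleGraph.pathGraph n) := by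
  have hL2 := (leaves_card hn hT).1
  obtain ⟨v1, hv1, v2, hv2, hne⟩ := Finset.one_lt_card.mp (lt_of_lt_of_le one_lt_two hL2)
  rw [Finset.mem_filter] at hv1 hv2
  obtain ⟨P, hP, -⟩ := hT.existsUnique_path v1 v2
  have hall := support_univ hT hdeg hv1.2 hv2.2 hne P hP
  have hnodup := hP.support_nodup
  have hlen : P.support.length = n := by
    have hsub : (Finset.univ : Finset (Fin n)) ⊆ P.support.toFinset := fun z _ => by
      rw [List.mem_toFinset]; exact hall z
    have h1 := Finset.card_le_card hsub
    rw [Finset.card_univ, Fintype.card_fin, List.toFinset_card_of_nodup hnodup] at h1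
    have h2 : P.support.toFinset.card ≤ n := by
      have := Finset.card_le_card (Finset.subset_univ P.support.toFinset)
      rwa [Finset.card_univ, Fintype.card_fin] at this
    rw [List.toFinset_card_of_nodup hnodup] at h2
    omega
  set l := P.support with hl
  have hinj : Function.Injective l.get := List.nodup_iff_injective_get.mp hnodup
  set g : Fin n → Fin n := fun i => l.get (Fin.cast hlen.symm i) with hg
  have hginj : Function.Injective g := by
    intro i j hij
    have := hinj hij
    exact Fin.cast_injective _ this
  have hgbij := Finite.injective_iff_bijective.mp hginj
  set e : Fin n ≃ Fin n := Equiv.ofBijective g hgbij with he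
  have hPlen : P.length + 1 = n := by
    rw [← SimpleGraph.Walk.length_support P]; exact hlen
  have hedges : P.edges.toFinset = T.edgeFinset := by
    apply Finset.eq_of_subset_of_card_le
    · intro x hx
      rw [List.mem_toFinset] at hx
      rw [SimpleGraph.mem_edgeFinset]
      exact P.edges_subset_edgeSet hx
    · have hc1 : P.edges.toFinset.card = P.length := by
        rw [List.toFinset_card_of_nodup hP.isTrail.edges_nodup, SimpleGraph.Walk.length_edges]
      have hc2 := hT.card_edgeFinset
      rw [Fintype.card_fin] at hc2
      omega
  -- consecutive support entries are adjacent
  have hA : ∀ (i : ℕ) (hi : i + 1 < l.length),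
      T.Adj (l.get ⟨i, by omega⟩) (l.get ⟨i+1, hi⟩) := by
    have hchain := SimpleGraph.Walk.isChain_adj_support P
    rw [List.isChain_iff_getElem] at hchain
    intro i hi
    exact hchain i (by simp only [← hl]; omega)
  -- adjacent support entries are consecutive
  have hB : ∀ a b : Fin l.length, T.Adj (l.get a) (l.get b) →
      ((a:ℕ)+1 = (b:ℕ) ∨ (b:ℕ)+1 = (a:ℕ)) := by
    intro a b hab
    have hmem : s(l.get a, l.get b) ∈ P.edges := by
      rw [← List.mem_toFinset, hedges, SimpleGraph.mem_edgeFinset]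
      exact hab
    rw [SimpleGraph.Walk.edges, List.mem_map] at hmem
    obtain ⟨d, hd, hde⟩ := hmem
    obtain ⟨k, hke⟩ := List.mem_iff_get.mp hd
    have hkl : (k:ℕ) + 1 < l.length := by
      have hk : (k:ℕ) < P.length :=
        lt_of_lt_of_le k.isLt (le_of_eq (SimpleGraph.Walk.length_darts P))
      have h5 : l.length = P.length + 1 := SimpleGraph.Walk.length_support P
      omega
    have hfst : d.fst = l.get ⟨(k:ℕ), by omega⟩ := by
      have hmap := SimpleGraph.Walk.map_fst_darts P
      have h1 : (P.darts.map (fun d => d.fst))[(k:ℕ)]'(by simpa using k.isLt) = d.fst := by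
        rw [List.getElem_map, ← List.get_eq_getElem (l := P.darts) (i := ⟨(k:ℕ), k.isLt⟩), hke]
      rw [List.getElem_of_eq hmap, List.getElem_dropLast] at h1
      rw [List.get_eq_getElem]
      exact h1.symm
    have hsnd : d.snd = l.get ⟨(k:ℕ)+1, hkl⟩ := by
      have hmap := SimpleGraph.Walk.map_snd_darts P
      have h1 : (P.darts.map (fun d => d.snd))[(k:ℕ)]'(by simpa using k.isLt) = d.snd := by
        rw [List.getElem_map, ← List.get_eq_getElem (l := P.darts) (i := ⟨(k:ℕ), k.isLt⟩), hke]
      rw [List.getElem_of_eq hmap, List.getElem_tail] at h1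
      rw [List.get_eq_getElem]
      exact h1.symm
    have hedge : d.edge = s(l.get ⟨(k:ℕ), by omega⟩, l.get ⟨(k:ℕ)+1, hkl⟩) := by
      have h0 : d.edge = s(d.fst, d.snd) := rfl
      rw [hfst, hsnd] at h0
      exact h0
    rw [hedge, Sym2.eq_iff] at hde
    rcases hde with ⟨hx, hy⟩ | ⟨hx, hy⟩
    · left
      have h1 := hinj hx
      have h2 := hinj hy
      rw [Fin.ext_iff] at h1 h2
      simp only at h1 h2
      omega
    · right
      have h1 := hinj hx
      have h2 := hinj hy
      rw [Fin.ext_iff] at h1 h2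
      simp only at h1 h2
      omega
  -- the key equivalence
  have hkey : ∀ i j : Fin n, (SimpleGraph.pathGraph n).Adj i j ↔ T.Adj (e i) (e j) := by
    intro i j
    have hei : e i = l.get ⟨(i:ℕ), by rw [hlen]; exact i.isLt⟩ := rfl
    have hej : e j = l.get ⟨(j:ℕ), by rw [hlen]; exact j.isLt⟩ := rfl
    rw [SimpleGraph.pathGraph_adj, hei, hej]
    constructor
    · rintro (hij | hij)
      · have hlt : (i:ℕ) + 1 < l.length := by rw [hlen, hij]; exact j.isLt
        have := hA (i:ℕ) hlt
        convert this using 2 <;> (apply Fin.ext; simp only [Fin.val_mk]; omega)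
      · have hlt : (j:ℕ) + 1 < l.length := by rw [hlen, hij]; exact i.isLt
        have := (hA (j:ℕ) hlt).symm
        convert this using 2 <;> (apply Fin.ext; simp only [Fin.val_mk]; omega)
    · intro hadj
      have := hB _ _ hadj
      simpa using this
  exact ⟨{ toEquiv := e.symm,
           map_rel_iff' := by
             intro u v
             have h := hkey (e.symm u) (e.symm v)
             simp only [Equiv.apply_symm_apply] at h
             exact h }⟩

/-- The Randić weight function on edges. -/
private noncomputable def Wfun {n : ℕ} (T : SimpleGraph (Fin n)) [DecidableRel T.Adj] :
    Sym2 (Fin n) → ℝ :=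
  Sym2.lift ⟨fun u v => 1 / Real.sqrt ((T.degree u : ℝ) * (T.degree v : ℝ)),
    fun u v => by simp [mul_comm]⟩

private noncomputable def Afun {n : ℕ} (T : SimpleGraph (Fin n)) [DecidableRel T.Adj] :
    Sym2 (Fin n) → ℝ :=
  Sym2.lift ⟨fun u v => 1/(2*(T.degree u : ℝ)) + 1/(2*(T.degree v : ℝ)),
    fun u v => by ring_nf⟩

private lemma Wfun_mk {n : ℕ} (T : SimpleGraph (Fin n)) [DecidableRel T.Adj] (u v : Fin n) :
    Wfun T s(u,v) = 1 / Real.sqrt ((T.degree u : ℝ) * (T.degree v : ℝ)) := rfl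

private lemma Afun_mk {n : ℕ} (T : SimpleGraph (Fin n)) [DecidableRel T.Adj] (u v : Fin n) :
    Afun T s(u,v) = 1/(2*(T.degree u : ℝ)) + 1/(2*(T.degree v : ℝ)) := rfl

private lemma randic_main {n : ℕ} (hn : 3 ≤ n) {T : SimpleGraph (Fin n)} [DecidableRel T.Adj]
    (hT : T.IsTree) :
    (∑ e ∈ T.edgeFinset, Wfun T e) ≤ ((n:ℝ) - 3 + 2*Real.sqrt 2)/2 ∧
    ((∀ v, T.degree v ≤ 2) →
      (∑ e ∈ T.edgeFinset, Wfun T e) = ((n:ℝ) - 3 + 2*Real.sqrt 2)/2) ∧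
    ((∑ e ∈ T.edgeFinset, Wfun T e) = ((n:ℝ) - 3 + 2*Real.sqrt 2)/2 →
      ∀ v, T.degree v ≤ 2) := by
  have hdpos : ∀ v : Fin n, 0 < T.degree v :=
    degree_pos (by omega) hT.isConnected
  have hdRpos : ∀ v : Fin n, (0:ℝ) < (T.degree v : ℝ) := fun v => by
    exact_mod_cast hdpos v
  -- sum of Afun over edges is n/2
  have hA_sum : ∑ e ∈ T.edgeFinset, Afun T e = (n:ℝ)/2 := by
    have h1 := sum_edge_lift T
      (fun u v => 1/(2*(T.degree u : ℝ)) + 1/(2*(T.degree v : ℝ)))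
      (fun u v => by ring_nf)
    have h2 : (∑ d : T.Dart, (1/(2*(T.degree d.fst : ℝ)) + 1/(2*(T.degree d.snd : ℝ))))
        = (n:ℝ) := by
      rw [Finset.sum_add_distrib]
      have hsymm : (∑ d : T.Dart, 1/(2*(T.degree d.snd : ℝ)))
          = ∑ d : T.Dart, 1/(2*(T.degree d.fst : ℝ)) := by
        apply Finset.sum_nbij' (fun d => SimpleGraph.Dart.symm d) (fun d => SimpleGraph.Dart.symm d)
          <;> intros <;> simp <;> rfl
      rw [hsymm, ← two_mul]
      have h3 : (∑ d : T.Dart, 1/(2*(T.degree d.fst : ℝ)))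
          = ∑ v : Fin n, (T.degree v : ℝ) * (1/(2*(T.degree v : ℝ))) := by
        rw [← Finset.sum_fiberwise_of_maps_to (t := (Finset.univ : Finset (Fin n)))
          (g := fun d : T.Dart => d.fst) (fun d _ => Finset.mem_univ _)
          (fun d => 1/(2*(T.degree d.fst : ℝ)))]
        apply Finset.sum_congr rfl
        intro v _
        have hconst : ∀ d ∈ Finset.univ.filter (fun d : T.Dart => d.fst = v),
            1/(2*(T.degree d.fst : ℝ)) = 1/(2*(T.degree v : ℝ)) := by
          intro d hd
          rw [(Finset.mem_filter.mp hd).2]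
        rw [Finset.sum_congr rfl hconst, Finset.sum_const, nsmul_eq_mul,
          SimpleGraph.dart_fst_fiber_card_eq_degree]
      rw [h3]
      have h4 : ∀ v : Fin n, (T.degree v : ℝ) * (1/(2*(T.degree v : ℝ))) = 1/2 := by
        intro v
        have hv := hdRpos v
        field_simp
      rw [Finset.sum_congr rfl (fun v _ => h4 v), Finset.sum_const, nsmul_eq_mul]
      simp only [Finset.card_univ, Fintype.card_fin]
      ring
    rw [h2] at h1
    show ∑ e ∈ T.edgeFinset, Sym2.lift _ e = (n:ℝ)/2
    linarith [h1]
  -- gap formula on edges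
  have hgapf : ∀ x y : Fin n, T.Adj x y → Afun T s(x,y) - Wfun T s(x,y)
      = (1/Real.sqrt (T.degree x : ℝ) - 1/Real.sqrt (T.degree y : ℝ))^2/2 := by
    intro x y _
    rw [Afun_mk, Wfun_mk]
    exact gap_eq (hdRpos x) (hdRpos y)
  have hgap0 : ∀ e ∈ T.edgeFinset, 0 ≤ Afun T e - Wfun T e := by
    intro e he
    rw [SimpleGraph.mem_edgeFinset] at he
    induction e with
    | _ x y =>
      rw [hgapf x y he]
      positivity
  -- pick two leaves and their unique neighbors
  obtain ⟨v1, hv1, v2, hv2, hne⟩ :=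
    Finset.one_lt_card.mp (lt_of_lt_of_le one_lt_two (leaves_card hn hT).1)
  rw [Finset.mem_filter] at hv1 hv2
  have hd1 : T.degree v1 = 1 := hv1.2
  have hd2 : T.degree v2 = 1 := hv2.2
  obtain ⟨u1, hu1⟩ := Finset.card_eq_one.mp hd1
  obtain ⟨u2, hu2⟩ := Finset.card_eq_one.mp hd2
  have hadj1 : T.Adj v1 u1 := by
    rw [← SimpleGraph.mem_neighborFinset, hu1]; exact Finset.mem_singleton_self _
  have hadj2 : T.Adj v2 u2 := by
    rw [← SimpleGraph.mem_neighborFinset, hu2]; exact Finset.mem_singleton_self _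
  have hdu1 : 2 ≤ T.degree u1 := adj_degree_two hn hT.isConnected hadj1 hd1
  have hdu2 : 2 ≤ T.degree u2 := adj_degree_two hn hT.isConnected hadj2 hd2
  set e1 : Sym2 (Fin n) := s(v1, u1) with he1
  set e2 : Sym2 (Fin n) := s(v2, u2) with he2
  have he1m : e1 ∈ T.edgeFinset := by
    rw [he1, SimpleGraph.mem_edgeFinset]; exact hadj1
  have he2m : e2 ∈ T.edgeFinset := by
    rw [he2, SimpleGraph.mem_edgeFinset]; exact hadj2
  have hne12 : e1 ≠ e2 := by
    rw [he1, he2]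
    intro h
    rw [Sym2.eq_iff] at h
    rcases h with ⟨h1, -⟩ | ⟨h1, h2⟩
    · exact hne h1
    · rw [← h2] at hd2
      omega
  have hpairsub : ({e1, e2} : Finset (Sym2 (Fin n))) ⊆ T.edgeFinset := by
    intro x hx
    rcases Finset.mem_insert.mp hx with rfl | hx
    · exact he1m
    · rw [Finset.mem_singleton] at hx; subst hx; exact he2m
  -- decomposition of the gap sum
  have hsplit : ∑ e ∈ T.edgeFinset, (Afun T e - Wfun T e)
      = (∑ e ∈ T.edgeFinset \ {e1, e2}, (Afun T e - Wfun T e))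
        + ((Afun T e1 - Wfun T e1) + (Afun T e2 - Wfun T e2)) := by
    rw [← Finset.sum_sdiff hpairsub, Finset.sum_pair hne12]
  -- leaf edge gaps
  have hleafgap : ∀ (v u : Fin n), T.Adj v u → T.degree v = 1 →
      Afun T s(v,u) - Wfun T s(v,u)
        = (1 - 1/Real.sqrt (T.degree u : ℝ))^2/2 := by
    intro v u hadj hv
    rw [hgapf v u hadj, hv]
    norm_num
  set c : ℝ := (3 - 2*Real.sqrt 2)/4 with hc
  have hgap1 : c ≤ Afun T e1 - Wfun T e1 := by
    rw [he1, hleafgap v1 u1 hadj1 hd1]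
    exact leaf_gap_lower (by exact_mod_cast hdu1)
  have hgap2 : c ≤ Afun T e2 - Wfun T e2 := by
    rw [he2, hleafgap v2 u2 hadj2 hd2]
    exact leaf_gap_lower (by exact_mod_cast hdu2)
  have hrest : 0 ≤ ∑ e ∈ T.edgeFinset \ {e1, e2}, (Afun T e - Wfun T e) :=
    Finset.sum_nonneg (fun e he => hgap0 e (Finset.mem_sdiff.mp he).1)
  have hWA : ∑ e ∈ T.edgeFinset, Wfun T e
      = (n:ℝ)/2 - ∑ e ∈ T.edgeFinset, (Afun T e - Wfun T e) := by
    rw [Finset.sum_sub_distrib, hA_sum]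
    ring
  have hsqrt2 : (0:ℝ) < Real.sqrt 2 := Real.sqrt_pos.2 (by norm_num)
  refine ⟨?_, ?_, ?_⟩
  · rw [hWA, hsplit]
    have : 2*c ≤ (∑ e ∈ T.edgeFinset \ {e1, e2}, (Afun T e - Wfun T e))
        + ((Afun T e1 - Wfun T e1) + (Afun T e2 - Wfun T e2)) := by linarith
    rw [hc] at this
    linarith
  · -- exact value when all degrees are ≤ 2
    intro hdeg
    have hLcard := (leaves_card hn hT).2 hdeg
    have hLeq : (Finset.univ.filter fun v => T.degree v = 1) = {v1, v2} := by
      apply (Finset.eq_of_subset_of_card_le ?_ ?_).symm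
      · intro x hx
        rcases Finset.mem_insert.mp hx with rfl | hx
        · exact Finset.mem_filter.mpr ⟨Finset.mem_univ _, hd1⟩
        · rw [Finset.mem_singleton] at hx; subst hx
          exact Finset.mem_filter.mpr ⟨Finset.mem_univ _, hd2⟩
      · rw [hLcard, Finset.card_pair hne]
    have hdu1' : T.degree u1 = 2 := le_antisymm (hdeg u1) hdu1
    have hdu2' : T.degree u2 = 2 := le_antisymm (hdeg u2) hdu2
    have hrest0 : ∀ e ∈ T.edgeFinset \ {e1, e2}, Afun T e - Wfun T e = 0 := by
      intro e he
      rw [Finset.mem_sdiff] at he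
      obtain ⟨hee, hne'⟩ := he
      rw [SimpleGraph.mem_edgeFinset] at hee
      induction e with
      | _ x y =>
        have hx2 : T.degree x = 2 := by
          rcases Nat.lt_or_ge (T.degree x) 2 with h | h
          · exfalso
            have hx1 : T.degree x = 1 := by have := hdpos x; omega
            have hxL : x ∈ (Finset.univ.filter fun v => T.degree v = 1) :=
              Finset.mem_filter.mpr ⟨Finset.mem_univ _, hx1⟩
            rw [hLeq] at hxL
            rcases Finset.mem_insert.mp hxL with rfl | hxL
            · -- x = v1, so y = u1 and e = e1
              have : y ∈ T.neighborFinset x := by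
                rw [SimpleGraph.mem_neighborFinset]; exact hee
              rw [hu1, Finset.mem_singleton] at this
              subst this
              exact hne' (by simp [he1])
            · rw [Finset.mem_singleton] at hxL; subst hxL
              have : y ∈ T.neighborFinset x := by
                rw [SimpleGraph.mem_neighborFinset]; exact hee
              rw [hu2, Finset.mem_singleton] at this
              subst this
              exact hne' (by simp [he2])
          · exact le_antisymm (hdeg x) h
        have hy2 : T.degree y = 2 := by
          rcases Nat.lt_or_ge (T.degree y) 2 with h | h
          · exfalso
            have hy1 : T.degree y = 1 := by have := hdpos y; omega
            have hyL : y ∈ (Finset.univ.filter fun v => T.degree v = 1) :=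
              Finset.mem_filter.mpr ⟨Finset.mem_univ _, hy1⟩
            rw [hLeq] at hyL
            rcases Finset.mem_insert.mp hyL with rfl | hyL
            · have : x ∈ T.neighborFinset y := by
                rw [SimpleGraph.mem_neighborFinset]; exact hee.symm
              rw [hu1, Finset.mem_singleton] at this
              subst this
              exact hne' (by simp [he1, Sym2.eq_swap])
            · rw [Finset.mem_singleton] at hyL; subst hyL
              have : x ∈ T.neighborFinset y := by
                rw [SimpleGraph.mem_neighborFinset]; exact hee.symm
              rw [hu2, Finset.mem_singleton] at this
              subst this
              exact hne' (by simp [he2, Sym2.eq_swap])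
          · exact le_antisymm (hdeg y) h
        rw [hgapf x y hee, hx2, hy2]
        simp
    have hgap1' : Afun T e1 - Wfun T e1 = c := by
      rw [he1, hleafgap v1 u1 hadj1 hd1, hdu1']
      rw [hc]
      exact_mod_cast const_eq
    have hgap2' : Afun T e2 - Wfun T e2 = c := by
      rw [he2, hleafgap v2 u2 hadj2 hd2, hdu2']
      rw [hc]
      exact_mod_cast const_eq
    rw [hWA, hsplit, Finset.sum_eq_zero hrest0, hgap1', hgap2', hc]
    ring
  · -- equality forces all degrees ≤ 2
    intro heq
    have hsum_gap : ∑ e ∈ T.edgeFinset, (Afun T e - Wfun T e) = 2*c := by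
      rw [hWA] at heq
      rw [hc]
      linarith [heq]
    have hrest0 : ∑ e ∈ T.edgeFinset \ {e1, e2}, (Afun T e - Wfun T e) = 0 := by
      rw [hsplit] at hsum_gap
      linarith
    have hzero : ∀ e ∈ T.edgeFinset \ {e1, e2}, Afun T e - Wfun T e = 0 := by
      rw [← Finset.sum_eq_zero_iff_of_nonneg
        (fun e he => hgap0 e (Finset.mem_sdiff.mp he).1)]
      exact hrest0
    have hgap1e : Afun T e1 - Wfun T e1 = c := by
      rw [hsplit] at hsum_gap
      linarith
    have hgap2e : Afun T e2 - Wfun T e2 = c := by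
      rw [hsplit] at hsum_gap
      linarith
    have hdu1' : T.degree u1 = 2 := by
      rw [he1, hleafgap v1 u1 hadj1 hd1, hc] at hgap1e
      have := leaf_gap_eq (by exact_mod_cast hdu1) hgap1e
      exact_mod_cast this
    have hdu2' : T.degree u2 = 2 := by
      rw [he2, hleafgap v2 u2 hadj2 hd2, hc] at hgap2e
      have := leaf_gap_eq (by exact_mod_cast hdu2) hgap2e
      exact_mod_cast this
    -- the set of vertices of degree ≥ 3 is closed under adjacency and misses v1
    by_contra hcon
    push_neg at hcon
    obtain ⟨w, hw⟩ := hcon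
    have hS : ∀ x ∈ {v : Fin n | 3 ≤ T.degree v}, ∀ y, T.Adj x y →
        y ∈ {v : Fin n | 3 ≤ T.degree v} := by
      intro x hx y hxy
      have hxe : s(x,y) ∈ T.edgeFinset := by
        rw [SimpleGraph.mem_edgeFinset]; exact hxy
      have hx3 : 3 ≤ T.degree x := hx
      have hnot1 : s(x,y) ≠ e1 := by
        rw [he1]
        intro h
        rw [Sym2.eq_iff] at h
        rcases h with ⟨h1, -⟩ | ⟨h1, -⟩ <;> rw [h1] at hx3 <;> omega
      have hnot2 : s(x,y) ≠ e2 := by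
        rw [he2]
        intro h
        rw [Sym2.eq_iff] at h
        rcases h with ⟨h1, -⟩ | ⟨h1, -⟩ <;> rw [h1] at hx3 <;> omega
      have hz := hzero s(x,y) (Finset.mem_sdiff.mpr ⟨hxe, by simp [hnot1, hnot2]⟩)
      rw [hgapf x y hxy] at hz
      have hsq : 1/Real.sqrt (T.degree x : ℝ) = 1/Real.sqrt (T.degree y : ℝ) := by
        have h1 : (1/Real.sqrt (T.degree x : ℝ) - 1/Real.sqrt (T.degree y : ℝ))^2 = 0 := by
          linarith
        have := pow_eq_zero_iff (n := 2) (by norm_num) |>.mp h1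
        linarith
      have hdeq : T.degree x = T.degree y := by
        have h1 : Real.sqrt (T.degree x : ℝ) = Real.sqrt (T.degree y : ℝ) := by
          rw [one_div, one_div] at hsq
          exact inv_injective hsq
        have h2 : (T.degree x : ℝ) = (T.degree y : ℝ) := by
          have := congrArg (fun t => t^2) h1
          simpa [Real.sq_sqrt (hdRpos x).le, Real.sq_sqrt (hdRpos y).le] using this
        exact_mod_cast h2
      show 3 ≤ T.degree y
      omega
    obtain ⟨p⟩ := hT.isConnected.preconnected w v1
    have hv1S : v1 ∈ {v : Fin n | 3 ≤ T.degree v} :=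
      closed_walk hS p (by show 3 ≤ T.degree w; omega)
    have : 3 ≤ T.degree v1 := hv1S
    omega

private lemma pathGraph_degree_le_two {n : ℕ} [DecidableRel (SimpleGraph.pathGraph n).Adj]
    (j : Fin n) : (SimpleGraph.pathGraph n).degree j ≤ 2 := by
  rw [← SimpleGraph.card_neighborFinset_eq_degree]
  have hsub : ∀ k ∈ (SimpleGraph.pathGraph n).neighborFinset j,
      (k:ℕ) ∈ ({j.val+1, j.val-1} : Finset ℕ) := by
    intro k hk
    rw [SimpleGraph.mem_neighborFinset, SimpleGraph.pathGraph_adj] at hk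
    simp only [Finset.mem_insert, Finset.mem_singleton]
    omega
  have h1 := Finset.card_le_card_of_injOn (f := fun k : Fin n => (k:ℕ)) hsub
    (fun a _ b _ h => Fin.ext h)
  have h2 : ({j.val+1, j.val-1} : Finset ℕ).card ≤ 2 :=
    (Finset.card_insert_le _ _).trans (by simp)
  omega

private lemma spec_of_iso {n : ℕ} {T : SimpleGraph (Fin n)} [DecidableRel T.Adj]
    (f : T ≃g SimpleGraph.pathGraph n) : ∀ v, T.degree v ≤ 2 := by
  classical
  intro v
  have h1 : T.degree v = Fintype.card (T.neighborSet v) :=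
    (SimpleGraph.card_neighborSet_eq_degree _ _).symm
  have h2 : Fintype.card (T.neighborSet v)
      = Fintype.card ((SimpleGraph.pathGraph n).neighborSet (f v)) :=
    Fintype.card_congr (f.mapNeighborSet v)
  have h3 : Fintype.card ((SimpleGraph.pathGraph n).neighborSet (f v))
      = (SimpleGraph.pathGraph n).degree (f v) :=
    SimpleGraph.card_neighborSet_eq_degree _ _
  rw [h1, h2, h3]
  exact pathGraph_degree_le_two _

theorem randicIndex_tree_le_path
    {n : ℕ} (hn : 3 ≤ n) (T : SimpleGraph (Fin n)) (hT : T.IsTree) :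
    randicIndex T ≤ ((n : ℝ) - 3 + 2 * Real.sqrt 2) / 2 ∧
    (randicIndex T = ((n : ℝ) - 3 + 2 * Real.sqrt 2) / 2 ↔
      Nonempty (T ≃g SimpleGraph.pathGraph n)) := by
  letI : DecidableRel T.Adj := Classical.decRel _
  have hr : randicIndex T = ∑ e ∈ T.edgeFinset, Wfun T e := rfl
  obtain ⟨hle, hval, hforce⟩ := randic_main hn hT
  refine ⟨hr ▸ hle, ?_, ?_⟩
  · intro heq
    exact iso_of_spec hn hT (hforce (hr ▸ heq))
  · rintro ⟨f⟩
    rw [hr]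
    exact hval (spec_of_iso f)
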